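/- For the Onsager potential g(u) = √(1−u²), the Legendre coefficient λ_{2ℓ} := ∫_{-1}^1 √(1−u²) P_{2ℓ}(u) du satisfies, for every ℓ ≥ 1, λ_{2ℓ} = −π / (2(ℓ+1)(2ℓ−1) 2^{4ℓ}) · C(2ℓ,ℓ)², where C(2ℓ,ℓ) is the central binomial coefficient. -/

import Mathlib

open MeasureTheory Polynomial Real

/-- The `n`-th Legendre polynomial, via Rodrigues' formula. -/
noncomputable def legendre (n : ℕ) : Polynomial ℝ :=
  Polynomial.C (1 / (2 ^ n * n.factorial : ℝ)) *
    (Polynomial.derivative^[n] ((Polynomial.X ^ 2 - 1) ^ n))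

namespace Onsager

noncomputable def A (n : ℕ) : Polynomial ℝ :=
  Polynomial.derivative^[n] ((Polynomial.X ^ 2 - 1) ^ n)

lemma iter_add (k : ℕ) (p q : Polynomial ℝ) :
    derivative^[k] (p + q) = derivative^[k] p + derivative^[k] q := by
  induction k generalizing p q with
  | zero => rfl
  | succ k ih =>
      rw [Function.iterate_succ_apply, derivative_add, ih,
        ← Function.iterate_succ_apply, ← Function.iterate_succ_apply]

lemma iter_sub (k : ℕ) (p q : Polynomial ℝ) :
    derivative^[k] (p - q) = derivative^[k] p - derivative^[k] q := by
  induction k generalizing p q with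
  | zero => rfl
  | succ k ih =>
      rw [Function.iterate_succ_apply, derivative_sub, ih,
        ← Function.iterate_succ_apply, ← Function.iterate_succ_apply]

/-- Leibniz: `D^[k+1](X p) = X D^[k+1] p + (k+1) D^[k] p`. -/
lemma iter_X_mul (k : ℕ) (p : Polynomial ℝ) :
    derivative^[k + 1] (X * p) =
      X * derivative^[k + 1] p + C ((k : ℝ) + 1) * derivative^[k] p := by
  induction k generalizing p with
  | zero => simp [derivative_mul]; ring
  | succ k ih =>
      rw [Function.iterate_succ_apply, derivative_mul, derivative_X, one_mul,
        iter_add, ih (derivative p), ← Function.iterate_succ_apply,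
        ← Function.iterate_succ_apply]
      simp only [Nat.succ_eq_add_one]
      push_cast
      simp only [C_add, C_1]
      ring

lemma deriv_W (n : ℕ) :
    derivative ((X ^ 2 - 1 : Polynomial ℝ) ^ (n + 1)) =
      C (2 * ((n : ℝ) + 1)) * (X * (X ^ 2 - 1) ^ n) := by
  rw [derivative_pow]
  simp only [derivative_sub, derivative_one, derivative_X_pow, Nat.add_sub_cancel]
  push_cast
  simp only [C_add, C_mul, C_1]
  ring



noncomputable def p (n : ℕ) (x : ℝ) : ℝ := (A n).eval x
noncomputable def dp (n : ℕ) (x : ℝ) : ℝ := ((A n).derivative).eval x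

lemma evL (k : ℕ) (q : Polynomial ℝ) (x : ℝ) :
    (derivative^[k + 1] (X * q)).eval x =
      x * (derivative^[k + 1] q).eval x + ((k : ℝ) + 1) * (derivative^[k] q).eval x := by
  rw [iter_X_mul]; simp

lemma evPA (n : ℕ) (x : ℝ) :
    dp (n + 1) x = 2 * ((n : ℝ) + 1) * (x * dp n x + ((n : ℝ) + 1) * p n x) := by
  have hdp : dp (n + 1) x = (derivative^[n + 2] ((X ^ 2 - 1 : Polynomial ℝ) ^ (n + 1))).eval x := by
    unfold dp A
    rw [← Function.iterate_succ_apply' derivative (n + 1)]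
  have h1 : (derivative^[n + 2] ((X ^ 2 - 1 : Polynomial ℝ) ^ (n + 1))).eval x
      = 2 * ((n : ℝ) + 1) * (x * (derivative^[n + 1] ((X ^ 2 - 1 : Polynomial ℝ) ^ n)).eval x
          + ((n : ℝ) + 1) * (derivative^[n] ((X ^ 2 - 1 : Polynomial ℝ) ^ n)).eval x) := by
    rw [Function.iterate_succ_apply, deriv_W, iterate_derivative_C_mul]
    have := evL n ((X ^ 2 - 1 : Polynomial ℝ) ^ n) x
    simp only [eval_mul, eval_C]
    rw [this]
  have hdpn : dp n x = (derivative^[n + 1] ((X ^ 2 - 1 : Polynomial ℝ) ^ n)).eval x := by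
    unfold dp A
    rw [← Function.iterate_succ_apply' derivative n]
  rw [hdp, h1, ← hdpn]
  rfl

lemma evPB (n : ℕ) (x : ℝ) :
    ((n : ℝ) + 2) * p (n + 2) x =
      2 * ((n : ℝ) + 2) * (((n : ℝ) + 2) * (x * p (n + 1) x) + (x ^ 2 - 1) * dp (n + 1) x) := by
  set q : Polynomial ℝ := (X ^ 2 - 1) ^ (n + 1) with hq
  have hp1 : p (n + 1) x = (derivative^[n + 1] q).eval x := rfl
  have hdp : dp (n + 1) x = (derivative^[n + 2] q).eval x := by
    unfold dp A
    rw [← Function.iterate_succ_apply' derivative (n + 1)]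
  -- way A : (X²-1)^(n+2) = X*(X*q) - q
  have hWA : ((X ^ 2 - 1 : Polynomial ℝ) ^ (n + 2)) = X * (X * q) - q := by
    rw [hq, pow_succ]; ring
  have hA2 : p (n + 2) x = (derivative^[n + 2] (X * (X * q))).eval x
      - (derivative^[n + 2] q).eval x := by
    unfold p A
    rw [hWA, iter_sub, eval_sub]
  have hA3 := evL (n + 1) (X * q) x
  have hXq := evL (n + 1) q x
  have hXq2 := evL n q x
  -- way B
  have hB : p (n + 2) x = 2 * ((n : ℝ) + 2) * ((derivative^[n + 1] (X * q)).eval x) := by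
    unfold p A
    rw [Function.iterate_succ_apply, deriv_W, iterate_derivative_C_mul]
    push_cast
    simp only [eval_mul, eval_C]
    rw [← hq]
    ring
  rw [hp1, hdp]
  push_cast at hA3 hXq hXq2 ⊢
  linear_combination (((n : ℝ) + 2)) * hB -
    2 * ((n : ℝ) + 2) * (- hA2 - hA3 - x * hXq - ((n : ℝ) + 2) * hXq2 + hB) - 2 * ((n : ℝ) + 2)^2 * hXq2
noncomputable def L (n : ℕ) (x : ℝ) : ℝ := (legendre n).eval x
noncomputable def dL (n : ℕ) (x : ℝ) : ℝ := ((legendre n).derivative).eval x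

lemma L_eq (n : ℕ) (x : ℝ) : L n x = (1 / (2 ^ n * n.factorial : ℝ)) * p n x := by
  unfold L legendre p A; simp [eval_mul]

lemma dL_eq (n : ℕ) (x : ℝ) : dL n x = (1 / (2 ^ n * n.factorial : ℝ)) * dp n x := by
  unfold dL legendre dp A; simp [derivative_C_mul, eval_mul]

lemma c_succ (n : ℕ) :
    (1 / (2 ^ (n + 1) * (n + 1).factorial : ℝ)) * (2 * ((n : ℝ) + 1)) =
      1 / (2 ^ n * n.factorial : ℝ) := by
  have h1 : (n.factorial : ℝ) ≠ 0 := Nat.cast_ne_zero.2 n.factorial_ne_zero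
  have h2 : ((n : ℝ) + 1) ≠ 0 := by positivity
  rw [Nat.factorial_succ]
  push_cast
  field_simp
  ring

lemma L_zero (x : ℝ) : L 0 x = 1 := by unfold L legendre; simp

lemma L_one (x : ℝ) : L 1 x = x := by
  unfold L legendre
  simp [pow_one, derivative_sub, derivative_one, derivative_X_pow]
  ring

lemma dL_zero (x : ℝ) : dL 0 x = 0 := by unfold dL legendre; simp

lemma evalpha (n : ℕ) (x : ℝ) :
    dL (n + 1) x = x * dL n x + ((n : ℝ) + 1) * L n x := by
  rw [dL_eq, dL_eq, L_eq, evPA]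
  linear_combination (x * dp n x + ((n : ℝ) + 1) * p n x) * c_succ n

lemma evbeta (n : ℕ) (x : ℝ) :
    ((n : ℝ) + 1) * L (n + 1) x = ((n : ℝ) + 1) * (x * L n x) + (x ^ 2 - 1) * dL n x := by
  cases n with
  | zero => simp [L_zero, L_one, dL_zero]
  | succ m =>
      have hPB := evPB m x
      have hc := c_succ (m + 1)
      push_cast at hc
      rw [L_eq, L_eq, dL_eq]
      push_cast
      linear_combination (1 / (2 ^ (m + 2) * (m + 2).factorial : ℝ)) * hPB +
        (((m : ℝ) + 2) * (x * p (m + 1) x) + (x ^ 2 - 1) * dp (m + 1) x) * hc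

lemma evdelta (n : ℕ) (x : ℝ) :
    x * dL (n + 1) x = dL n x + ((n : ℝ) + 1) * L (n + 1) x := by
  linear_combination x * evalpha n x - evbeta n x

lemma eveps (n : ℕ) (x : ℝ) :
    (x ^ 2 - 1) * dL (n + 1) x = ((n : ℝ) + 1) * (x * L (n + 1) x - L n x) := by
  linear_combination x * evdelta n x - evalpha n x

lemma evgamma (n : ℕ) (x : ℝ) :
    ((n : ℝ) + 2) * L (n + 2) x = (2 * (n : ℝ) + 3) * (x * L (n + 1) x) - ((n : ℝ) + 1) * L n x := by
  have hb := evbeta (n + 1) x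
  push_cast at hb
  linear_combination hb + eveps n x

lemma evii (n : ℕ) (x : ℝ) :
    (2 * (n : ℝ) + 3) * ((x ^ 2 - 1) * dL (n + 1) x) =
      ((n : ℝ) + 1) * ((n : ℝ) + 2) * (L (n + 2) x - L n x) := by
  linear_combination (2 * (n : ℝ) + 3) * eveps n x - ((n : ℝ) + 1) * evgamma n x


lemma hasDerivAt_g (t : ℝ) :
    HasDerivAt (fun s : ℝ => s * Real.sqrt s) (3 / 2 * Real.sqrt t) t := by
  rcases lt_trichotomy t 0 with h | h | h
  · have h0 : Real.sqrt t = 0 := Real.sqrt_eq_zero'.2 h.le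
    rw [h0, mul_zero]
    have hev : (fun _ : ℝ => (0 : ℝ)) =ᶠ[nhds t] fun s : ℝ => s * Real.sqrt s := by
      filter_upwards [Iio_mem_nhds h] with s hs
      simp [Real.sqrt_eq_zero'.2 (le_of_lt hs)]
    exact (hasDerivAt_const t 0).congr_of_eventuallyEq hev.symm
  · subst h
    rw [Real.sqrt_zero, mul_zero, hasDerivAt_iff_tendsto_slope]
    have hev : (fun s : ℝ => Real.sqrt s) =ᶠ[nhdsWithin 0 {(0:ℝ)}ᶜ] slope (fun s : ℝ => s * Real.sqrt s) 0 := by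
      filter_upwards [self_mem_nhdsWithin] with s hs
      have hs' : (s : ℝ) ≠ 0 := hs
      simp [slope, hs']
    exact Filter.Tendsto.congr' hev
      ((Real.continuous_sqrt.tendsto' 0 0 Real.sqrt_zero).mono_left nhdsWithin_le_nhds)
  · have h1 := Real.hasDerivAt_sqrt (ne_of_gt h)
    have h2 : HasDerivAt (fun s : ℝ => s * Real.sqrt s) _ t := (hasDerivAt_id' t).fun_mul h1
    convert h2 using 1
    have hs : (0:ℝ) < Real.sqrt t := Real.sqrt_pos.2 h
    have ht : Real.sqrt t * Real.sqrt t = t := Real.mul_self_sqrt h.le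
    field_simp
    linear_combination ht

lemma sqrt_cont : Continuous fun u : ℝ => Real.sqrt (1 - u ^ 2) := by
  exact Real.continuous_sqrt.comp (by continuity)

lemma hasDerivAt_F (q : Polynomial ℝ) (u : ℝ) :
    HasDerivAt (fun v : ℝ => -(1 / 3) * ((1 - v ^ 2) * Real.sqrt (1 - v ^ 2)) * q.eval v)
      (u * Real.sqrt (1 - u ^ 2) * q.eval u +
        -(1 / 3) * ((1 - u ^ 2) * Real.sqrt (1 - u ^ 2)) * (derivative q).eval u) u := by
  have hinner : HasDerivAt (fun v : ℝ => 1 - v ^ 2) (-(2 * u)) u := by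
    simpa using (hasDerivAt_pow 2 u).const_sub 1
  have hg := (hasDerivAt_g (1 - u ^ 2)).comp u hinner
  have hq := q.hasDerivAt u
  have h : HasDerivAt (fun v : ℝ => -(1 / 3) * ((1 - v ^ 2) * Real.sqrt (1 - v ^ 2)) * q.eval v) _ u :=
    ((hg.const_mul (-(1 / 3) : ℝ)).fun_mul hq)
  convert h using 1
  dsimp only [Function.comp]
  ring

lemma cont_poly (q : Polynomial ℝ) : Continuous fun u : ℝ => q.eval u := q.continuous

lemma ibp (q : Polynomial ℝ) :
    ∫ u in (-1 : ℝ)..1, u * Real.sqrt (1 - u ^ 2) * q.eval u =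
      (1 / 3) * ∫ u in (-1 : ℝ)..1, (1 - u ^ 2) * Real.sqrt (1 - u ^ 2) * (derivative q).eval u := by
  have hc1 : Continuous fun u : ℝ => u * Real.sqrt (1 - u ^ 2) * q.eval u :=
    (continuous_id.mul sqrt_cont).mul (cont_poly q)
  have hc2 : Continuous fun u : ℝ => (1 - u ^ 2) * Real.sqrt (1 - u ^ 2) * (derivative q).eval u :=
    (((by continuity : Continuous fun u : ℝ => 1 - u ^ 2).mul sqrt_cont)).mul (cont_poly (derivative q))
  have hcont : Continuous fun u : ℝ => u * Real.sqrt (1 - u ^ 2) * q.eval u +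
      -(1 / 3) * ((1 - u ^ 2) * Real.sqrt (1 - u ^ 2)) * (derivative q).eval u := by
    apply hc1.add
    have : (fun u : ℝ => -(1 / 3) * ((1 - u ^ 2) * Real.sqrt (1 - u ^ 2)) * (derivative q).eval u)
        = fun u : ℝ => -(1 / 3) * ((1 - u ^ 2) * Real.sqrt (1 - u ^ 2) * (derivative q).eval u) := by
      funext u; ring
    rw [this]
    exact continuous_const.mul hc2
  have h0 := intervalIntegral.integral_eq_sub_of_hasDerivAt (a := (-1 : ℝ)) (b := (1 : ℝ))
    (f := fun v : ℝ => -(1 / 3) * ((1 - v ^ 2) * Real.sqrt (1 - v ^ 2)) * q.eval v)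
    (fun u _ => hasDerivAt_F q u) (hcont.intervalIntegrable _ _)
  have hb : (-(1 / 3) * ((1 - (1:ℝ) ^ 2) * Real.sqrt (1 - (1:ℝ) ^ 2)) * q.eval 1) -
      (-(1 / 3) * ((1 - (-1:ℝ) ^ 2) * Real.sqrt (1 - (-1:ℝ) ^ 2)) * q.eval (-1)) = 0 := by
    norm_num
  rw [hb] at h0
  have hsplit : (∫ u in (-1 : ℝ)..1, (u * Real.sqrt (1 - u ^ 2) * q.eval u +
      -(1 / 3) * ((1 - u ^ 2) * Real.sqrt (1 - u ^ 2)) * (derivative q).eval u)) =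
      (∫ u in (-1 : ℝ)..1, u * Real.sqrt (1 - u ^ 2) * q.eval u) +
      (∫ u in (-1 : ℝ)..1, -(1 / 3) * ((1 - u ^ 2) * Real.sqrt (1 - u ^ 2) * (derivative q).eval u)) := by
    rw [← intervalIntegral.integral_add (hc1.intervalIntegrable _ _)
      ((hc2.intervalIntegrable _ _).const_mul (-(1 / 3 : ℝ)))]
    congr 1
    funext u
    ring
  rw [hsplit, intervalIntegral.integral_const_mul] at h0
  linarith

noncomputable def Lam (n : ℕ) : ℝ :=
  ∫ u in (-1 : ℝ)..1, Real.sqrt (1 - u ^ 2) * (legendre n).eval u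

lemma evgamma' (n : ℕ) (u : ℝ) :
    ((n : ℝ) + 2) * (legendre (n + 2)).eval u =
      (2 * (n : ℝ) + 3) * (u * (legendre (n + 1)).eval u) - ((n : ℝ) + 1) * (legendre n).eval u :=
  evgamma n u

lemma evii' (n : ℕ) (u : ℝ) :
    (2 * (n : ℝ) + 3) * ((u ^ 2 - 1) * (derivative (legendre (n + 1))).eval u) =
      ((n : ℝ) + 1) * ((n : ℝ) + 2) * ((legendre (n + 2)).eval u - (legendre n).eval u) :=
  evii n u

lemma Lam_rec (n : ℕ) :
    ((n : ℝ) + 2) * ((n : ℝ) + 4) * Lam (n + 2) = ((n : ℝ) + 1) * ((n : ℝ) - 1) * Lam n := by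
  have hS := sqrt_cont
  have hint : ∀ q : Polynomial ℝ, IntervalIntegrable
      (fun u : ℝ => Real.sqrt (1 - u ^ 2) * q.eval u) MeasureTheory.volume (-1) 1 :=
    fun q => (hS.mul q.continuous).intervalIntegrable _ _
  have hintu : ∀ q : Polynomial ℝ, IntervalIntegrable
      (fun u : ℝ => u * Real.sqrt (1 - u ^ 2) * q.eval u) MeasureTheory.volume (-1) 1 :=
    fun q => ((continuous_id.mul hS).mul q.continuous).intervalIntegrable _ _
  set I : ℝ := ∫ u in (-1 : ℝ)..1, u * Real.sqrt (1 - u ^ 2) * (legendre (n + 1)).eval u with hI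
  set K : ℝ := ∫ u in (-1 : ℝ)..1,
      (1 - u ^ 2) * Real.sqrt (1 - u ^ 2) * (derivative (legendre (n + 1))).eval u with hK
  have h1 : ((n : ℝ) + 2) * Lam (n + 2) = (2 * (n : ℝ) + 3) * I - ((n : ℝ) + 1) * Lam n := by
    rw [Lam, ← intervalIntegral.integral_const_mul]
    have hpt : (fun u : ℝ => ((n : ℝ) + 2) * (Real.sqrt (1 - u ^ 2) * (legendre (n + 2)).eval u)) =
        fun u : ℝ => (2 * (n : ℝ) + 3) * (u * Real.sqrt (1 - u ^ 2) * (legendre (n + 1)).eval u) -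
          ((n : ℝ) + 1) * (Real.sqrt (1 - u ^ 2) * (legendre n).eval u) := by
      funext u
      linear_combination Real.sqrt (1 - u ^ 2) * evgamma' n u
    rw [hpt, intervalIntegral.integral_sub ((hintu _).const_mul _) ((hint _).const_mul _),
      intervalIntegral.integral_const_mul, intervalIntegral.integral_const_mul]
    rfl
  have h2 : I = (1 / 3) * K := ibp (legendre (n + 1))
  have h3 : (2 * (n : ℝ) + 3) * K = ((n : ℝ) + 1) * ((n : ℝ) + 2) * (Lam n - Lam (n + 2)) := by
    rw [hK, ← intervalIntegral.integral_const_mul]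
    have hpt : (fun u : ℝ => (2 * (n : ℝ) + 3) *
        ((1 - u ^ 2) * Real.sqrt (1 - u ^ 2) * (derivative (legendre (n + 1))).eval u)) =
        fun u : ℝ => ((n : ℝ) + 1) * ((n : ℝ) + 2) * (Real.sqrt (1 - u ^ 2) * (legendre n).eval u) -
          ((n : ℝ) + 1) * ((n : ℝ) + 2) * (Real.sqrt (1 - u ^ 2) * (legendre (n + 2)).eval u) := by
      funext u
      linear_combination (-(Real.sqrt (1 - u ^ 2))) * evii' n u
    rw [hpt, intervalIntegral.integral_sub ((hint _).const_mul _) ((hint _).const_mul _),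
      intervalIntegral.integral_const_mul, intervalIntegral.integral_const_mul]
    rw [Lam, Lam]
    ring
  linear_combination 3 * h1 + h3 + 3 * (2 * (n : ℝ) + 3) * h2

lemma Lam_zero : Lam 0 = Real.pi / 2 := by
  rw [Lam]
  have hpt : (fun u : ℝ => Real.sqrt (1 - u ^ 2) * (legendre 0).eval u) =
      fun u : ℝ => Real.sqrt (1 - u ^ 2) := by
    funext u
    have h := L_zero u
    unfold L at h
    rw [h, mul_one]
  rw [hpt]
  exact integral_sqrt_one_sub_sq

lemma key' (m : ℕ) (hm : 1 ≤ m) :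
    Lam (2 * m) * (2 * ((m : ℝ) + 1) * (2 * (m : ℝ) - 1) * 2 ^ (4 * m)) =
      -(Real.pi * ((2 * m).choose m : ℝ) ^ 2) := by
  induction m, hm using Nat.le_induction with
  | base =>
      have h := Lam_rec 0
      rw [Lam_zero] at h
      norm_num at h ⊢
      linear_combination 8 * h
  | succ m hm ih =>
      have h := Lam_rec (2 * m)
      rw [show 2 * m + 2 = 2 * (m + 1) by ring] at h
      push_cast at h ⊢
      have hcb : ((m : ℝ) + 1) * (((2 * (m + 1)).choose (m + 1) : ℕ) : ℝ) =
          2 * (2 * (m : ℝ) + 1) * (((2 * m).choose m : ℕ) : ℝ) := by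
        have h2 := Nat.succ_mul_centralBinom_succ m
        unfold Nat.centralBinom at h2
        exact_mod_cast congrArg (Nat.cast : ℕ → ℝ) h2
      push_cast at hcb
      have hpow : ((2 : ℝ) ^ (4 * (m + 1)) : ℝ) = 2 ^ (4 * m) * 16 := by
        rw [show 4 * (m + 1) = 4 * m + 4 by ring, pow_add]
        norm_num
      rw [hpow]
      apply mul_left_cancel₀
        (show ((2 * (m : ℝ) + 2) * (2 * (m : ℝ) + 4) * ((m : ℝ) + 1) ^ 2) ≠ 0 by positivity)
      linear_combination (16 * ((m : ℝ) + 2) * (2 * (m : ℝ) + 1) ^ 2 * ((m : ℝ) + 1)) * ih +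
        (2 * ((m : ℝ) + 2) * (2 * (m : ℝ) + 1) * 16 * (2 : ℝ) ^ (4 * m) * ((m : ℝ) + 1) ^ 2) * h -
        (-4 * Real.pi * ((m : ℝ) + 1) * ((m : ℝ) + 2) *
          (((m : ℝ) + 1) * (((2 * (m + 1)).choose (m + 1) : ℕ) : ℝ) +
            2 * (2 * (m : ℝ) + 1) * (((2 * m).choose m : ℕ) : ℝ))) * hcb

lemma key (m : ℕ) (hm : 1 ≤ m) :
    Lam (2 * m) =
      -(Real.pi / (2 * ((m : ℝ) + 1) * (2 * (m : ℝ) - 1) * 2 ^ (4 * m))) *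
        ((2 * m).choose m : ℝ) ^ 2 := by
  have hD : (2 * ((m : ℝ) + 1) * (2 * (m : ℝ) - 1) * 2 ^ (4 * m)) ≠ 0 := by
    have h1 : (1 : ℝ) ≤ (m : ℝ) := by exact_mod_cast hm
    have : (0:ℝ) < 2 * (m : ℝ) - 1 := by linarith
    positivity
  rw [show -(Real.pi / (2 * ((m : ℝ) + 1) * (2 * (m : ℝ) - 1) * 2 ^ (4 * m))) *
        ((2 * m).choose m : ℝ) ^ 2 =
      (-(Real.pi * ((2 * m).choose m : ℝ) ^ 2)) /
        (2 * ((m : ℝ) + 1) * (2 * (m : ℝ) - 1) * 2 ^ (4 * m)) from by ring,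
    eq_div_iff hD]
  exact key' m hm

end Onsager

/-- Legendre coefficients of the Onsager potential `g(u) = √(1−u²)`:
`λ_{2ℓ} = −π C(2ℓ,ℓ)² / (2(ℓ+1)(2ℓ−1) 2^{4ℓ})` for `ℓ ≥ 1`. -/
theorem onsager_legendre_coeffs (ℓ : ℕ) (hℓ : 1 ≤ ℓ) :
    ∫ u in (-1 : ℝ)..1, Real.sqrt (1 - u ^ 2) * (legendre (2 * ℓ)).eval u =
      -(Real.pi / (2 * ((ℓ : ℝ) + 1) * (2 * (ℓ : ℝ) - 1) * 2 ^ (4 * ℓ))) *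
        ((2 * ℓ).choose ℓ : ℝ) ^ 2 := by
  exact Onsager.key ℓ hℓ
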